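/- Consider the many-to-one matching market with F = {f1, f2, f3}, W = {w1, w2, w3, w4} and substitutable (but not LAD) preferences: ≻_{f1}: {w1,w2}, {w1}, {w2}, {w3,w4}, {w3}, {w4}; ≻_{f2}: {w3}, {w1,w4}, {w4}, {w1,w2}, {w1}, {w2}; ≻_{f3}: {w4}, {w2,w3}, {w1,w2}, {w3}, {w1}, {w2}; ≻_{w1} = ≻_{w2}: f2, f3, f1; ≻_{w3}: f1, f3, f2; ≻_{w4}: f1, f2, f3. Then: (i) the worker-optimal stable matching μ_W(≻) assigns μ_W(f1) = {w3,w4}, μ_W(f2) = {w1,w2}, μ_W(f3) = ∅, and the firm-optimal stable matching μ_F(≻) assigns μ_F(f1) = {w1,w2}, μ_F(f2) = {w3}, μ_F(f3) = {w4}; (ii) under the worker-optimal stable rule h_W, although h_W(≻)(f1) = {w3,w4} ≠ {w1,w2} = μ_F(≻)(f1), the truncation strategy ≻'_{f1} = ≻_{f1}|_{{w1,w2}} (with acceptable sets {w1,w2}, {w1}, {w2}) yields μ_W(≻_{-f1}, ≻'_{f1})(f1) = ∅, which is strictly worse for f1 than h_W(≻)(f1) = {w3,w4} under ≻_{f1};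 hence the strategy used in the proof of the General Manipulability Theorem fails when preferences are substitutable but do not satisfy LAD. -/

import Mathlib

/-!
Common framework for many-to-many matching markets (Manasero–Oviedo,
"General Manipulability Theorem for a Matching Model").

Agents on each side have strict linear orders (strict total orders) over
finsets of the other side.  `Pref.Ch` is the choice function, selecting the
most preferred subset.
-/

/-- A strict preference of an agent over subsets of the (finite) set `α` of
potential partners: a strict total order on `Finset α`, where `gt S T` means
`S` is strictly preferred to `T`. -/
structure Pref (α : Type*) [DecidableEq α] [Fintype α] where
  gt : Finset α → Finset α → Prop
  isSTO : IsStrictTotalOrder (Finset α) gt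

namespace Pref

variable {α : Type*} [DecidableEq α] [Fintype α]

/-- The choice set `Ch(S, ≻)`: the `≻`-maximal subset of `S`. -/
noncomputable def Ch (p : Pref α) (S : Finset α) : Finset α := by
  classical
  haveI := p.isSTO
  haveI : IsStrictTotalOrder (Finset α) (Function.swap p.gt) := IsStrictTotalOrder.swap _
  exact @Finset.max' _ (linearOrderOfSTO (Function.swap p.gt)) S.powerset
    ⟨∅, Finset.empty_mem_powerset S⟩

/-- Substitutability: if `w ∈ Ch(S)` then `w ∈ Ch(S \ {w'})` for any other `w' ∈ S`. -/
def Substitutable (p : Pref α) : Prop :=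
  ∀ (S : Finset α) (w w' : α), w ∈ S → w' ∈ S → w ≠ w' →
    w ∈ p.Ch S → w ∈ p.Ch (S.erase w')

/-- Law of aggregate demand: `Y ⊆ X` implies `|Ch(Y)| ≤ |Ch(X)|`. -/
def LAD (p : Pref α) : Prop :=
  ∀ Y X : Finset α, Y ⊆ X → (p.Ch Y).card ≤ (p.Ch X).card

/-- `p.HasList L` : the sets in `L` are exactly the acceptable sets, in strictly
decreasing order of preference and all preferred to `∅`; any set not in the
list (other than `∅`) is unacceptable, i.e. worse than `∅`. -/
def HasList (p : Pref α) (L : List (Finset α)) : Prop :=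
  List.Chain' p.gt (L ++ [∅]) ∧ ∀ S : Finset α, S ∉ L → S ≠ ∅ → p.gt ∅ S

/-- `q`-separability of a preference with quota `q`. -/
def QSeparable (p : Pref α) (q : ℕ) : Prop :=
  (∀ S : Finset α, q < S.card → p.gt ∅ S) ∧
  (∀ (S : Finset α) (v : α), v ∉ S → S.card < q → (p.gt (insert v S) S ↔ p.gt {v} ∅))

end Pref

/-- `p'` is the restriction `p |_T` of `p` to `T`:
(i) any set not contained in `T` is worse than `∅`;
(ii) for `S ⊆ T`, `S ≻' ∅ ↔ S ≻ ∅`;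
(iii) for `S, S' ⊆ T`, `S ≻' S' ↔ S ≻ S'`. -/
def IsRestriction {α : Type*} [DecidableEq α] [Fintype α]
    (p : Pref α) (T : Finset α) (p' : Pref α) : Prop :=
  (∀ S : Finset α, ¬ S ⊆ T → p'.gt ∅ S) ∧
  (∀ S : Finset α, S ⊆ T → (p'.gt S ∅ ↔ p.gt S ∅)) ∧
  (∀ S S' : Finset α, S ⊆ T → S' ⊆ T → (p'.gt S S' ↔ p.gt S S'))

variable (F W : Type*) [DecidableEq F] [Fintype F] [DecidableEq W] [Fintype W]

/-- A (many-to-many) matching between firms `F` and workers `W`. -/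
structure Matching where
  fm : F → Finset W
  wm : W → Finset F
  compat : ∀ f w, w ∈ fm f ↔ f ∈ wm w

/-- A preference profile: one preference for each firm and each worker. -/
structure Profile where
  fp : F → Pref W
  wp : W → Pref F

variable {F W}

/-- All agents' preferences are substitutable. -/
def Profile.Substitutable (P : Profile F W) : Prop :=
  (∀ f, (P.fp f).Substitutable) ∧ (∀ w, (P.wp w).Substitutable)

/-- All agents' preferences satisfy the law of aggregate demand. -/
def Profile.LAD (P : Profile F W) : Prop :=
  (∀ f, (P.fp f).LAD) ∧ (∀ w, (P.wp w).LAD)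

/-- The profile obtained from `P` by replacing firm `f`'s preference by `p`. -/
def Profile.updateFirm (P : Profile F W) (f : F) (p : Pref W) : Profile F W :=
  ⟨Function.update P.fp f p, P.wp⟩

/-- The profile obtained from `P` by replacing worker `w`'s preference by `p`. -/
def Profile.updateWorker (P : Profile F W) (w : W) (p : Pref F) : Profile F W :=
  ⟨P.fp, Function.update P.wp w p⟩

/-- Individual rationality: every agent chooses its whole assignment. -/
def IndRational (P : Profile F W) (μ : Matching F W) : Prop :=
  (∀ f, (P.fp f).Ch (μ.fm f) = μ.fm f) ∧ (∀ w, (P.wp w).Ch (μ.wm w) = μ.wm w)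

/-- The pair `(w, f)` blocks the matching `μ`. -/
def Blocks (P : Profile F W) (μ : Matching F W) (w : W) (f : F) : Prop :=
  w ∉ μ.fm f ∧ w ∈ (P.fp f).Ch (insert w (μ.fm f)) ∧ f ∈ (P.wp w).Ch (insert f (μ.wm w))

/-- (Pairwise) stability. -/
def Stable (P : Profile F W) (μ : Matching F W) : Prop :=
  IndRational P μ ∧ ∀ w f, ¬ Blocks P μ w f

/-- `μF` is the firm-optimal stable matching for `P`. -/
def FirmOptimal (P : Profile F W) (μF : Matching F W) : Prop :=
  Stable P μF ∧ ∀ μ, Stable P μ → ∀ f, μF.fm f = μ.fm f ∨ (P.fp f).gt (μF.fm f) (μ.fm f)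

/-- `μW` is the worker-optimal stable matching for `P`. -/
def WorkerOptimal (P : Profile F W) (μW : Matching F W) : Prop :=
  Stable P μW ∧ ∀ μ, Stable P μ → ∀ w, μW.wm w = μ.wm w ∨ (P.wp w).gt (μW.wm w) (μ.wm w)

/-- Firm `f` satisfies the manipulability property (w.r.t. the rule `h`, the true
profile `P` and the firm-optimal stable matching `μF`): if `h(≻)(f) ≠ μF(≻)(f)`
then some report `≻'_f` (in the domain: substitutable and LAD) gives `f` a
strictly `≻_f`-better assignment. -/
def FirmManip (h : Profile F W → Matching F W) (P : Profile F W)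
    (μF : Matching F W) (f : F) : Prop :=
  (h P).fm f ≠ μF.fm f → ∃ p' : Pref W, p'.Substitutable ∧ p'.LAD ∧
    (P.fp f).gt ((h (P.updateFirm f p')).fm f) ((h P).fm f)

/-- Firm `f` satisfies the manipulability property with Blair order. -/
def FirmManipB (h : Profile F W → Matching F W) (P : Profile F W)
    (μF : Matching F W) (f : F) : Prop :=
  (h P).fm f ≠ μF.fm f → ∃ p' : Pref W, p'.Substitutable ∧ p'.LAD ∧
    ((P.fp f).Ch ((h (P.updateFirm f p')).fm f ∪ (h P).fm f) = (h (P.updateFirm f p')).fm f ∧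
      (h (P.updateFirm f p')).fm f ≠ (h P).fm f)

/-- Worker `w` satisfies the manipulability property. -/
def WorkerManip (h : Profile F W → Matching F W) (P : Profile F W)
    (μW : Matching F W) (w : W) : Prop :=
  (h P).wm w ≠ μW.wm w → ∃ p' : Pref F, p'.Substitutable ∧ p'.LAD ∧
    (P.wp w).gt ((h (P.updateWorker w p')).wm w) ((h P).wm w)

/-- Worker `w` satisfies the manipulability property with Blair order. -/
def WorkerManipB (h : Profile F W → Matching F W) (P : Profile F W)
    (μW : Matching F W) (w : W) : Prop :=
  (h P).wm w ≠ μW.wm w → ∃ p' : Pref F, p'.Substitutable ∧ p'.LAD ∧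
    ((P.wp w).Ch ((h (P.updateWorker w p')).wm w ∪ (h P).wm w) = (h (P.updateWorker w p')).wm w ∧
      (h (P.updateWorker w p')).wm w ≠ (h P).wm w)

namespace Pref

variable {α : Type*} [DecidableEq α] [Fintype α]

lemma Ch_spec (p : Pref α) (S : Finset α) :
    p.Ch S ⊆ S ∧ ∀ T ⊆ S, T = p.Ch S ∨ p.gt (p.Ch S) T := by
  classical
  haveI := p.isSTO
  haveI h2 : IsStrictTotalOrder (Finset α) (Function.swap p.gt) := IsStrictTotalOrder.swap _
  unfold Ch
  constructor
  · exact Finset.mem_powerset.mp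
      (@Finset.max'_mem _ (linearOrderOfSTO (Function.swap p.gt)) _ _)
  · intro T hT
    exact @Finset.le_max' _ (linearOrderOfSTO (Function.swap p.gt))
      S.powerset T (Finset.mem_powerset.mpr hT)

lemma Ch_eq_of (p : Pref α) {S C : Finset α} (hCS : C ⊆ S)
    (h : ∀ T ⊆ S, T ≠ C → p.gt C T) : p.Ch S = C := by
  haveI := p.isSTO
  rcases (p.Ch_spec S).2 C hCS with h1 | h1
  · exact h1.symm
  · by_contra hne
    exact asymm h1 (h _ (p.Ch_spec S).1 hne)

lemma HasList.pairwise {p : Pref α} {L : List (Finset α)} (h : p.HasList L) :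
    List.Pairwise p.gt (L ++ [∅]) := by
  haveI := p.isSTO
  exact List.isChain_iff_pairwise.mp h.1

/-- If `C` sits at a split point of the list, it beats everything except
itself and the earlier entries. -/
lemma HasList.gt_of_split {p : Pref α} {L : List (Finset α)} (h : p.HasList L)
    {C : Finset α} (L1 L2 : List (Finset α)) (hsplit : L ++ [∅] = L1 ++ C :: L2)
    (hC : C = ∅ ∨ C ∈ L) {T : Finset α} (hT1 : T ∉ L1) (hT : T ≠ C) : p.gt C T := by
  haveI := p.isSTO
  have hpw := h.pairwise
  rw [hsplit] at hpw
  have hpw2 := (List.pairwise_append.mp hpw).2.1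
  have hcons := (List.pairwise_cons.mp hpw2).1
  by_cases hmem : T ∈ L ++ [∅]
  · rw [hsplit] at hmem
    rcases List.mem_append.mp hmem with h1 | h2
    · exact absurd h1 hT1
    · rcases List.mem_cons.mp h2 with h3 | h3
      · exact absurd h3 hT
      · exact hcons T h3
  · have hTL : T ∉ L := fun hh => hmem (List.mem_append.mpr (Or.inl hh))
    have hTne : T ≠ ∅ := fun hh => hmem (by simp [hh])
    have h0T : p.gt ∅ T := h.2 T hTL hTne
    rcases hC with rfl | hCL
    · exact h0T
    · have hC0 : p.gt C ∅ := by
        have := (List.pairwise_append.mp h.pairwise).2.2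
        exact this C hCL ∅ (by simp)
      exact _root_.trans hC0 h0T

lemma HasList.Ch_eq {p : Pref α} {L : List (Finset α)} (h : p.HasList L)
    {S C : Finset α} (L1 L2 : List (Finset α)) (hsplit : L ++ [∅] = L1 ++ C :: L2)
    (hC : C = ∅ ∨ C ∈ L) (hCS : C ⊆ S) (hnot : ∀ T ∈ L1, ¬ T ⊆ S) : p.Ch S = C := by
  refine p.Ch_eq_of hCS fun T hTS hne => ?_
  exact h.gt_of_split L1 L2 hsplit hC (fun hm => hnot T hm hTS) hne

lemma HasList.mem_Ch {p : Pref α} {L : List (Finset α)} (h : p.HasList L)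
    {S : Finset α} (C : Finset α) (L1 L2 : List (Finset α)) (hsplit : L ++ [∅] = L1 ++ C :: L2)
    (hC : C = ∅ ∨ C ∈ L) (hCS : C ⊆ S) (hnot : ∀ T ∈ L1, ¬ T ⊆ S)
    {a : α} (ha : a ∈ C) : a ∈ p.Ch S := by
  rw [h.Ch_eq L1 L2 hsplit hC hCS hnot]; exact ha

lemma HasList.not_mem_Ch {p : Pref α} {L : List (Finset α)} (h : p.HasList L)
    {S : Finset α} (C : Finset α) (L1 L2 : List (Finset α)) (hsplit : L ++ [∅] = L1 ++ C :: L2)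
    (hC : C = ∅ ∨ C ∈ L) (hCS : C ⊆ S) (hnot : ∀ T ∈ L1, ¬ T ⊆ S)
    {a : α} (ha : a ∉ C) : a ∉ p.Ch S := by
  rw [h.Ch_eq L1 L2 hsplit hC hCS hnot]; exact ha

/-- Individual rationality forces membership in the acceptable list. -/
lemma HasList.mem_of_Ch_self {p : Pref α} {L : List (Finset α)} (h : p.HasList L)
    {S : Finset α} (hS : p.Ch S = S) : S = ∅ ∨ S ∈ L := by
  haveI := p.isSTO
  by_contra hcon
  push_neg at hcon
  have h1 : p.gt ∅ S := h.2 S hcon.2 hcon.1.ne_empty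
  have h2 : p.gt S ∅ := by
    rcases (p.Ch_spec S).2 ∅ (Finset.empty_subset S) with he | he
    · exact absurd (he.trans hS).symm hcon.1.ne_empty
    · rwa [hS] at he
  exact asymm h1 h2

end Pref

/-- Example 1 of Section 5.  Many-to-one market with
`F = {f₁, f₂, f₃}` (encoded `Fin 3`) and `W = {w₁, w₂, w₃, w₄}` (encoded `Fin 4`),
with the substitutable—but not LAD—preferences of the paper.  Then:
(i) the worker-optimal stable matching `μW` is `f₁ ↦ {w₃, w₄}, f₂ ↦ {w₁, w₂}, f₃ ↦ ∅`
and the firm-optimal stable matching `μF` is `f₁ ↦ {w₁, w₂}, f₂ ↦ {w₃}, f₃ ↦ {w₄}`;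
(ii) under the worker-optimal stable rule, although `μW(f₁) = {w₃, w₄} ≠ {w₁, w₂} = μF(f₁)`,
the truncation `≻'_{f₁} = ≻_{f₁}|_{{w₁, w₂}}` leaves `f₁` unmatched at the
worker-optimal stable matching `μW'` of the misreported profile, an outcome strictly
worse for `f₁` (w.r.t. its true preference) than `μW(f₁) = {w₃, w₄}`. -/
theorem stmt11 (P : Profile (Fin 3) (Fin 4))
    (hsub : P.Substitutable) (hnolad : ¬ (P.fp 0).LAD)
    (hf1 : (P.fp 0).HasList [{0, 1}, {0}, {1}, {2, 3}, {2}, {3}])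
    (hf2 : (P.fp 1).HasList [{2}, {0, 3}, {3}, {0, 1}, {0}, {1}])
    (hf3 : (P.fp 2).HasList [{3}, {1, 2}, {0, 1}, {2}, {0}, {1}])
    (hw1 : (P.wp 0).HasList [{1}, {2}, {0}])
    (hw2 : (P.wp 1).HasList [{1}, {2}, {0}])
    (hw3 : (P.wp 2).HasList [{0}, {2}, {1}])
    (hw4 : (P.wp 3).HasList [{0}, {1}, {2}])
    (p' : Pref (Fin 4)) (hp'list : p'.HasList [{0, 1}, {0}, {1}])
    (hp'res : IsRestriction (P.fp 0) {0, 1} p') :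
    ∃ μW μF μW' : Matching (Fin 3) (Fin 4),
      -- (i)
      WorkerOptimal P μW ∧ FirmOptimal P μF ∧
      μW.fm 0 = {2, 3} ∧ μW.fm 1 = {0, 1} ∧ μW.fm 2 = ∅ ∧
      μF.fm 0 = {0, 1} ∧ μF.fm 1 = {2} ∧ μF.fm 2 = {3} ∧
      -- (ii)
      μW.fm 0 ≠ μF.fm 0 ∧
      WorkerOptimal (P.updateFirm 0 p') μW' ∧
      μW'.fm 0 = ∅ ∧
      (P.fp 0).gt (μW.fm 0) (μW'.fm 0) := by
  classical
  refine ⟨⟨![{2,3},{0,1},∅], ![{1},{1},{0},{0}], by decide⟩,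
          ⟨![{0,1},{2},{3}], ![{0},{0},{1},{2}], by decide⟩,
          ⟨![∅,{0,3},{1,2}], ![{1},{2},{2},{1}], by decide⟩,
          ?_, ?_, rfl, rfl, rfl, rfl, rfl, rfl, by decide, ?_, rfl, ?_⟩
  · -- WorkerOptimal P μW
    constructor
    · refine ⟨⟨?_, ?_⟩, ?_⟩
      · intro f; fin_cases f
        · exact hf1.Ch_eq [{0,1},{0},{1}] [{2},{3},∅]
            (by decide) (by decide) (by decide) (by decide)
        · exact hf2.Ch_eq [{2},{0,3},{3}] [{0},{1},∅]
            (by decide) (by decide) (by decide) (by decide)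
        · exact hf3.Ch_eq [{3},{1,2},{0,1},{2},{0},{1}] []
            (by decide) (by decide) (by decide) (by decide)
      · intro w; fin_cases w
        · exact hw1.Ch_eq [] [{2},{0},∅] (by decide) (by decide) (by decide) (by decide)
        · exact hw2.Ch_eq [] [{2},{0},∅] (by decide) (by decide) (by decide) (by decide)
        · exact hw3.Ch_eq [] [{2},{1},∅] (by decide) (by decide) (by decide) (by decide)
        · exact hw4.Ch_eq [] [{1},{2},∅] (by decide) (by decide) (by decide) (by decide)
      · intro w f hb
        obtain ⟨hb1, hb2, hb3⟩ := hb
        fin_cases w <;> fin_cases f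
        · exact hw1.not_mem_Ch ({1}) [] [{2},{0},∅] (by decide) (by decide) (by decide)
            (by decide) (by decide) hb3
        · exact hb1 (by decide)
        · exact hw1.not_mem_Ch ({1}) [] [{2},{0},∅] (by decide) (by decide) (by decide)
            (by decide) (by decide) hb3
        · exact hw2.not_mem_Ch ({1}) [] [{2},{0},∅] (by decide) (by decide) (by decide)
            (by decide) (by decide) hb3
        · exact hb1 (by decide)
        · exact hw2.not_mem_Ch ({1}) [] [{2},{0},∅] (by decide) (by decide) (by decide)
            (by decide) (by decide) hb3
        · exact hb1 (by decide)
        · exact hw3.not_mem_Ch ({0}) [] [{2},{1},∅] (by decide) (by decide) (by decide)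
            (by decide) (by decide) hb3
        · exact hw3.not_mem_Ch ({0}) [] [{2},{1},∅] (by decide) (by decide) (by decide)
            (by decide) (by decide) hb3
        · exact hb1 (by decide)
        · exact hw4.not_mem_Ch ({0}) [] [{1},{2},∅] (by decide) (by decide) (by decide)
            (by decide) (by decide) hb3
        · exact hw4.not_mem_Ch ({0}) [] [{1},{2},∅] (by decide) (by decide) (by decide)
            (by decide) (by decide) hb3
    · -- worker optimality: every worker gets their top choice
      intro μ hμ w
      fin_cases w
      · rcases eq_or_ne (μ.wm 0) {1} with he | hne
        · exact Or.inl he.symm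
        · exact Or.inr (hw1.gt_of_split [] [{2},{0},∅] (by decide) (by decide)
            (by simp) hne)
      · rcases eq_or_ne (μ.wm 1) {1} with he | hne
        · exact Or.inl he.symm
        · exact Or.inr (hw2.gt_of_split [] [{2},{0},∅] (by decide) (by decide)
            (by simp) hne)
      · rcases eq_or_ne (μ.wm 2) {0} with he | hne
        · exact Or.inl he.symm
        · exact Or.inr (hw3.gt_of_split [] [{2},{1},∅] (by decide) (by decide)
            (by simp) hne)
      · rcases eq_or_ne (μ.wm 3) {0} with he | hne
        · exact Or.inl he.symm
        · exact Or.inr (hw4.gt_of_split [] [{1},{2},∅] (by decide) (by decide)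
            (by simp) hne)
  · -- FirmOptimal P μF
    constructor
    · refine ⟨⟨?_, ?_⟩, ?_⟩
      · intro f; fin_cases f
        · exact hf1.Ch_eq [] [{0},{1},{2,3},{2},{3},∅]
            (by decide) (by decide) (by decide) (by decide)
        · exact hf2.Ch_eq [] [{0,3},{3},{0,1},{0},{1},∅]
            (by decide) (by decide) (by decide) (by decide)
        · exact hf3.Ch_eq [] [{1,2},{0,1},{2},{0},{1},∅]
            (by decide) (by decide) (by decide) (by decide)
      · intro w; fin_cases w
        · exact hw1.Ch_eq [{1},{2}] [∅] (by decide) (by decide) (by decide) (by decide)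
        · exact hw2.Ch_eq [{1},{2}] [∅] (by decide) (by decide) (by decide) (by decide)
        · exact hw3.Ch_eq [{0},{2}] [∅] (by decide) (by decide) (by decide) (by decide)
        · exact hw4.Ch_eq [{0},{1}] [∅] (by decide) (by decide) (by decide) (by decide)
      · intro w f hb
        obtain ⟨hb1, hb2, hb3⟩ := hb
        fin_cases w <;> fin_cases f
        · exact hb1 (by decide)
        · exact hf2.not_mem_Ch ({2}) [] [{0,3},{3},{0,1},{0},{1},∅] (by decide) (by decide)
            (by decide) (by decide) (by decide) hb2
        · exact hf3.not_mem_Ch ({3}) [] [{1,2},{0,1},{2},{0},{1},∅] (by decide) (by decide)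
            (by decide) (by decide) (by decide) hb2
        · exact hb1 (by decide)
        · exact hf2.not_mem_Ch ({2}) [] [{0,3},{3},{0,1},{0},{1},∅] (by decide) (by decide)
            (by decide) (by decide) (by decide) hb2
        · exact hf3.not_mem_Ch ({3}) [] [{1,2},{0,1},{2},{0},{1},∅] (by decide) (by decide)
            (by decide) (by decide) (by decide) hb2
        · exact hf1.not_mem_Ch ({0,1}) [] [{0},{1},{2,3},{2},{3},∅] (by decide) (by decide)
            (by decide) (by decide) (by decide) hb2
        · exact hb1 (by decide)
        · exact hf3.not_mem_Ch ({3}) [] [{1,2},{0,1},{2},{0},{1},∅] (by decide) (by decide)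
            (by decide) (by decide) (by decide) hb2
        · exact hf1.not_mem_Ch ({0,1}) [] [{0},{1},{2,3},{2},{3},∅] (by decide) (by decide)
            (by decide) (by decide) (by decide) hb2
        · exact hf2.not_mem_Ch ({2}) [] [{0,3},{3},{0,1},{0},{1},∅] (by decide) (by decide)
            (by decide) (by decide) (by decide) hb2
        · exact hb1 (by decide)
    · -- firm optimality: every firm gets its top choice
      intro μ hμ f
      fin_cases f
      · rcases eq_or_ne (μ.fm 0) {0,1} with he | hne
        · exact Or.inl he.symm
        · exact Or.inr (hf1.gt_of_split [] [{0},{1},{2,3},{2},{3},∅] (by decide)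
            (by decide) (by simp) hne)
      · rcases eq_or_ne (μ.fm 1) {2} with he | hne
        · exact Or.inl he.symm
        · exact Or.inr (hf2.gt_of_split [] [{0,3},{3},{0,1},{0},{1},∅] (by decide)
            (by decide) (by simp) hne)
      · rcases eq_or_ne (μ.fm 2) {3} with he | hne
        · exact Or.inl he.symm
        · exact Or.inr (hf3.gt_of_split [] [{1,2},{0,1},{2},{0},{1},∅] (by decide)
            (by decide) (by simp) hne)
  · -- WorkerOptimal (P.updateFirm 0 p') μW'
    constructor
    · refine ⟨⟨?_, ?_⟩, ?_⟩
      · intro f; fin_cases f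
        · exact hp'list.Ch_eq [{0,1},{0},{1}] [] (by decide) (by decide)
            (by decide) (by decide)
        · exact hf2.Ch_eq [{2}] [{3},{0,1},{0},{1},∅]
            (by decide) (by decide) (by decide) (by decide)
        · exact hf3.Ch_eq [{3}] [{0,1},{2},{0},{1},∅]
            (by decide) (by decide) (by decide) (by decide)
      · intro w; fin_cases w
        · exact hw1.Ch_eq [] [{2},{0},∅] (by decide) (by decide) (by decide) (by decide)
        · exact hw2.Ch_eq [{1}] [{0},∅] (by decide) (by decide) (by decide) (by decide)
        · exact hw3.Ch_eq [{0}] [{1},∅] (by decide) (by decide) (by decide) (by decide)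
        · exact hw4.Ch_eq [{0}] [{2},∅] (by decide) (by decide) (by decide) (by decide)
      · intro w f hb
        obtain ⟨hb1, hb2, hb3⟩ := hb
        fin_cases w <;> fin_cases f
        · exact hw1.not_mem_Ch ({1}) [] [{2},{0},∅] (by decide) (by decide) (by decide)
            (by decide) (by decide) hb3
        · exact hb1 (by decide)
        · exact hf3.not_mem_Ch ({1,2}) [{3}] [{0,1},{2},{0},{1},∅] (by decide) (by decide)
            (by decide) (by decide) (by decide) hb2
        · exact hw2.not_mem_Ch ({2}) [{1}] [{0},∅] (by decide) (by decide) (by decide)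
            (by decide) (by decide) hb3
        · exact hf2.not_mem_Ch ({0,3}) [{2}] [{3},{0,1},{0},{1},∅] (by decide) (by decide)
            (by decide) (by decide) (by decide) hb2
        · exact hb1 (by decide)
        · exact hp'list.not_mem_Ch (∅) [{0,1}, {0}, {1}] [] (by decide) (by decide)
            (by decide) (by decide) (by decide) hb2
        · exact hw3.not_mem_Ch ({2}) [{0}] [{1},∅] (by decide) (by decide) (by decide)
            (by decide) (by decide) hb3
        · exact hb1 (by decide)
        · exact hp'list.not_mem_Ch (∅) [{0,1}, {0}, {1}] [] (by decide) (by decide)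
            (by decide) (by decide) (by decide) hb2
        · exact hb1 (by decide)
        · exact hw4.not_mem_Ch ({1}) [{0}] [{2},∅] (by decide) (by decide) (by decide)
            (by decide) (by decide) hb3
    · -- worker optimality of μW'
      intro μ hμ w
      have hfm0 : μ.fm 0 = ∅ ∨ μ.fm 0 ∈ [({0,1} : Finset (Fin 4)),{0},{1}] :=
        hp'list.mem_of_Ch_self (hμ.1.1 0)
      have h20 : (2 : Fin 4) ∉ μ.fm 0 := by
        rcases hfm0 with h | h
        · rw [h]; decide
        · simp only [List.mem_cons, List.mem_singleton, List.not_mem_nil, or_false] at h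
          rcases h with h | h | h <;> rw [h] <;> decide
      have h30 : (3 : Fin 4) ∉ μ.fm 0 := by
        rcases hfm0 with h | h
        · rw [h]; decide
        · simp only [List.mem_cons, List.mem_singleton, List.not_mem_nil, or_false] at h
          rcases h with h | h | h <;> rw [h] <;> decide
      have hnot20 : μ.wm 2 ≠ {0} := by
        intro h
        exact h20 ((μ.compat 0 2).mpr (by rw [h]; decide))
      have hnot30 : μ.wm 3 ≠ {0} := by
        intro h
        exact h30 ((μ.compat 0 3).mpr (by rw [h]; decide))
      have hnotf2 : μ.wm 1 ≠ {1} := by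
        intro h1
        have h1f : (1 : Fin 4) ∈ μ.fm 1 := (μ.compat 1 1).mpr (by rw [h1]; decide)
        have hfm1 : μ.fm 1 = ∅ ∨ μ.fm 1 ∈
            [({2} : Finset (Fin 4)),{0,3},{3},{0,1},{0},{1}] :=
          hf2.mem_of_Ch_self (hμ.1.1 1)
        have hfm1' : μ.fm 1 = {0,1} ∨ μ.fm 1 = {1} := by
          rcases hfm1 with h | h
          · rw [h] at h1f; exact absurd h1f (by decide)
          · simp only [List.mem_cons, List.mem_singleton, List.not_mem_nil, or_false] at h
            rcases h with h | h | h | h | h | h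
            · rw [h] at h1f; exact absurd h1f (by decide)
            · rw [h] at h1f; exact absurd h1f (by decide)
            · rw [h] at h1f; exact absurd h1f (by decide)
            · exact Or.inl h
            · rw [h] at h1f; exact absurd h1f (by decide)
            · exact Or.inr h
        have h3f1 : (3 : Fin 4) ∉ μ.fm 1 := by
          rcases hfm1' with h | h <;> rw [h] <;> decide
        have hwm3 : μ.wm 3 = ∅ ∨ μ.wm 3 ∈ [({0} : Finset (Fin 3)),{1},{2}] :=
          hw4.mem_of_Ch_self (hμ.1.2 3)
        have hwm3' : μ.wm 3 = ∅ ∨ μ.wm 3 = {2} := by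
          rcases hwm3 with h | h
          · exact Or.inl h
          · simp only [List.mem_cons, List.mem_singleton, List.not_mem_nil, or_false] at h
            rcases h with h | h | h
            · exact absurd ((μ.compat 0 3).mpr (by rw [h]; decide)) h30
            · exact absurd ((μ.compat 1 3).mpr (by rw [h]; decide)) h3f1
            · exact Or.inr h
        refine hμ.2 3 1 ⟨h3f1, ?_, ?_⟩
        · rcases hfm1' with h | h <;> rw [h]
          · exact hf2.mem_Ch ({0,3}) [{2}] [{3},{0,1},{0},{1},∅] (by decide) (by decide)
              (by decide) (by decide) (by decide)
          · exact hf2.mem_Ch ({3}) [{2}, {0,3}] [{0,1},{0},{1},∅] (by decide) (by decide)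
              (by decide) (by decide) (by decide)
        · rcases hwm3' with h | h <;> rw [h]
          · exact hw4.mem_Ch ({1}) [{0}] [{2},∅] (by decide) (by decide)
              (by decide) (by decide) (by decide)
          · exact hw4.mem_Ch ({1}) [{0}] [{2},∅] (by decide) (by decide)
              (by decide) (by decide) (by decide)
      fin_cases w
      · rcases eq_or_ne (μ.wm 0) {1} with he | hne
        · exact Or.inl he.symm
        · exact Or.inr (hw1.gt_of_split [] [{2},{0},∅] (by decide) (by decide)
            (by simp) hne)
      · rcases eq_or_ne (μ.wm 1) {2} with he | hne
        · exact Or.inl he.symm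
        · exact Or.inr (hw2.gt_of_split [{1}] [{0},∅] (by decide) (by decide)
            (by simpa using hnotf2) hne)
      · rcases eq_or_ne (μ.wm 2) {2} with he | hne
        · exact Or.inl he.symm
        · exact Or.inr (hw3.gt_of_split [{0}] [{1},∅] (by decide) (by decide)
            (by simpa using hnot20) hne)
      · rcases eq_or_ne (μ.wm 3) {1} with he | hne
        · exact Or.inl he.symm
        · exact Or.inr (hw4.gt_of_split [{0}] [{2},∅] (by decide) (by decide)
            (by simpa using hnot30) hne)
  · -- (P.fp 0).gt {2,3} ∅
    exact hf1.gt_of_split [{0,1},{0},{1}] [{2},{3},∅] (by decide) (by decide)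
      (by decide) (by decide)
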